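/- The operator V_t = Q_T^{-1/2} S_{T-t} Q_t^{1/2} is a contraction: ‖V_t‖ ≤ 1 for all t ∈ (0,T). -/
import Mathlib


open ContinuousLinearMap
open scoped RealInnerProductSpace

/-- The operator `V_t = Q_T^{-1/2} S_{T-t} Q_t^{1/2}` is a contraction: `‖V_t‖ ≤ 1`
for `t ∈ (0,T)`.  Here `Q_T = Q_{T-t} + S_{T-t} Q_t S_{T-t}^*` with `Q_{T-t} ≥ 0`. -/
theorem Vt_contraction
    {H : Type*} [NormedAddCommGroup H] [InnerProductSpace ℝ H] [CompleteSpace H]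
    {t T : ℝ} (ht : 0 < t) (htT : t < T)
    (S : ℝ → H →L[ℝ] H)
    (Qt QTmt QT Qthalf QThalf Vt : H →L[ℝ] H)
    (hQthalf_sa : IsSelfAdjoint Qthalf) (hQThalf_sa : IsSelfAdjoint QThalf)
    (hQthalf_sq : Qthalf.comp Qthalf = Qt) (hQThalf_sq : QThalf.comp QThalf = QT)
    (hQTmt_pos : ∀ x : H, 0 ≤ ⟪QTmt x, x⟫)
    (hid : QT = QTmt + (S (T - t)).comp (Qt.comp (ContinuousLinearMap.adjoint (S (T - t)))))
    (hVt : QThalf.comp Vt = (S (T - t)).comp Qthalf)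
    (hQThalf_inj : Function.Injective QThalf) (hQThalf_dense : DenseRange QThalf) :
    ‖Vt‖ ≤ 1 := by
  set A := ContinuousLinearMap.adjoint Vt with hAdef
  have hQth_adj : ContinuousLinearMap.adjoint Qthalf = Qthalf :=
    ContinuousLinearMap.isSelfAdjoint_iff'.mp hQthalf_sa
  have hQTh_adj : ContinuousLinearMap.adjoint QThalf = QThalf :=
    ContinuousLinearMap.isSelfAdjoint_iff'.mp hQThalf_sa
  have hA : A.comp QThalf = Qthalf.comp (ContinuousLinearMap.adjoint (S (T - t))) := by
    have h := congrArg ContinuousLinearMap.adjoint hVt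
    rwa [ContinuousLinearMap.adjoint_comp, ContinuousLinearMap.adjoint_comp,
      hQth_adj, hQTh_adj] at h
  -- squared-norm identities
  have hnQth : ∀ z : H, ‖Qthalf z‖ ^ 2 = ⟪Qt z, z⟫ := by
    intro z
    rw [← hQthalf_sq]
    calc ‖Qthalf z‖ ^ 2 = ⟪Qthalf z, Qthalf z⟫ := (real_inner_self_eq_norm_sq _).symm
      _ = ⟪ContinuousLinearMap.adjoint Qthalf (Qthalf z), z⟫ := by
          rw [ContinuousLinearMap.adjoint_inner_left]
      _ = ⟪(Qthalf.comp Qthalf) z, z⟫ := by rw [hQth_adj]; rfl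
  have hnQTh : ∀ z : H, ‖QThalf z‖ ^ 2 = ⟪QT z, z⟫ := by
    intro z
    rw [← hQThalf_sq]
    calc ‖QThalf z‖ ^ 2 = ⟪QThalf z, QThalf z⟫ := (real_inner_self_eq_norm_sq _).symm
      _ = ⟪ContinuousLinearMap.adjoint QThalf (QThalf z), z⟫ := by
          rw [ContinuousLinearMap.adjoint_inner_left]
      _ = ⟪(QThalf.comp QThalf) z, z⟫ := by rw [hQTh_adj]; rfl
  have key : ∀ x : H, ‖A (QThalf x)‖ ≤ ‖QThalf x‖ := by
    intro x
    have h1 : A (QThalf x) = Qthalf (ContinuousLinearMap.adjoint (S (T - t)) x) :=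
      congrFun (congrArg DFunLike.coe hA) x
    have hsq : ‖A (QThalf x)‖ ^ 2 ≤ ‖QThalf x‖ ^ 2 := by
      rw [h1, hnQth, hnQTh]
      have hexp : ⟪QT x, x⟫ = ⟪QTmt x, x⟫
          + ⟪Qt (ContinuousLinearMap.adjoint (S (T - t)) x),
             ContinuousLinearMap.adjoint (S (T - t)) x⟫ := by
        rw [hid]
        simp only [ContinuousLinearMap.add_apply, ContinuousLinearMap.comp_apply,
          inner_add_left]
        congr 1
        rw [← ContinuousLinearMap.adjoint_inner_right (S (T - t))]
      rw [hexp]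
      have := hQTmt_pos x
      linarith
    exact le_of_pow_le_pow_left₀ two_ne_zero (norm_nonneg _) hsq
  have key' : ∀ y : H, ‖A y‖ ≤ ‖y‖ := by
    intro y
    have hcl : IsClosed {y : H | ‖A y‖ ≤ ‖y‖} :=
      isClosed_le (Continuous.norm (A.continuous)) continuous_norm
    have hsub : Set.range QThalf ⊆ {y : H | ‖A y‖ ≤ ‖y‖} := by
      rintro _ ⟨x, rfl⟩; exact key x
    have hmem : y ∈ closure (Set.range QThalf) := by
      rw [hQThalf_dense.closure_range]; trivial
    exact hcl.closure_subset_iff.mpr hsub hmem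
  have hAnorm : ‖A‖ ≤ 1 :=
    A.opNorm_le_bound zero_le_one (fun y => by simpa using key' y)
  calc ‖Vt‖ = ‖A‖ := (ContinuousLinearMap.adjoint.norm_map Vt).symm
    _ ≤ 1 := hAnorm
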